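/- arXiv:0909.0050 — 3 statements merged into one kernel-verified Lean document; each statement's English description precedes it below -/
import Mathlib

section
/- If t > d, then the convolution of the polynomial weight w_{-t}(x) = (1+|x|)^{-t} with itself is pointwise bounded by K·w_{-t}, i.e. there exists a constant K > 0 (depending only on t and d) such that ∫_{ℝ^d} (1+|y|)^{-t}(1+|x-y|)^{-t} dy ≤ K (1+|x|)^{-t} for all x ∈ ℝ^d. -/
open MeasureTheory

private lemma key_bound {t a b : ℝ} (ht : 0 < t) (hb : 0 ≤ b) (hab : b ≤ 2 * a) (ha : 0 ≤ a) :
    (1 + a) ^ (-t) ≤ 2 ^ t * (1 + b) ^ (-t) := by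
  have hA : (0:ℝ) < (1 + a) ^ t := Real.rpow_pos_of_pos (by linarith) t
  have hB : (0:ℝ) < (1 + b) ^ t := Real.rpow_pos_of_pos (by linarith) t
  have h1 : (1 + b) ≤ 2 * (1 + a) := by linarith
  have h2 : (1 + b) ^ t ≤ (2 * (1 + a)) ^ t :=
    Real.rpow_le_rpow (by linarith) h1 ht.le
  have h3 : (2 * (1 + a)) ^ t = 2 ^ t * (1 + a) ^ t :=
    Real.mul_rpow (by norm_num) (by linarith)
  rw [Real.rpow_neg (by linarith), Real.rpow_neg (by linarith),
    inv_eq_one_div, inv_eq_one_div, mul_one_div, div_le_div_iff₀ hA hB]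
  nlinarith [h2, h3]

/-- Subconvolutivity of polynomial weights: if `t > d` then
`∫ (1+|y|)^{-t} (1+|x-y|)^{-t} dy ≤ K (1+|x|)^{-t}` for a constant `K = K(t,d)`. -/
theorem polynomial_weight_subconvolutive (d : ℕ) (t : ℝ) (ht : (d : ℝ) < t) :
    ∃ K > (0 : ℝ), ∀ x : EuclideanSpace ℝ (Fin d),
      (∫ y : EuclideanSpace ℝ (Fin d),
          (1 + ‖y‖) ^ (-t) * (1 + ‖x - y‖) ^ (-t))
        ≤ K * (1 + ‖x‖) ^ (-t) := by
  have htpos : (0:ℝ) < t := lt_of_le_of_lt (Nat.cast_nonneg d) ht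
  have hC : Integrable (fun y : EuclideanSpace ℝ (Fin d) => (1 + ‖y‖) ^ (-t)) := by
    apply integrable_one_add_norm
    simpa [finrank_euclideanSpace] using ht
  set C : ℝ := ∫ y : EuclideanSpace ℝ (Fin d), (1 + ‖y‖) ^ (-t) with hCdef
  have hCpos : 0 < C := by
    rw [hCdef]
    rw [integral_pos_iff_support_of_nonneg (fun y => by positivity) hC]
    have : (Function.support fun y : EuclideanSpace ℝ (Fin d) => (1 + ‖y‖) ^ (-t))
        = Set.univ := by
      ext y
      simp only [Function.mem_support, Set.mem_univ, iff_true]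
      positivity
    rw [this]
    exact MeasureTheory.Measure.measure_univ_pos.mpr (NeZero.ne _)
  refine ⟨2 ^ t * (2 * C), by positivity, fun x => ?_⟩
  have hC2 : Integrable (fun y : EuclideanSpace ℝ (Fin d) => (1 + ‖x - y‖) ^ (-t)) :=
    hC.comp_sub_left x
  have hg : Integrable (fun y : EuclideanSpace ℝ (Fin d) =>
      2 ^ t * (1 + ‖x‖) ^ (-t) * ((1 + ‖y‖) ^ (-t) + (1 + ‖x - y‖) ^ (-t))) :=
    (hC.add hC2).const_mul _
  have hmono : (∫ y : EuclideanSpace ℝ (Fin d),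
      (1 + ‖y‖) ^ (-t) * (1 + ‖x - y‖) ^ (-t)) ≤
      ∫ y : EuclideanSpace ℝ (Fin d),
        2 ^ t * (1 + ‖x‖) ^ (-t) * ((1 + ‖y‖) ^ (-t) + (1 + ‖x - y‖) ^ (-t)) := by
    apply integral_mono_of_nonneg
    · filter_upwards with y
      positivity
    · exact hg
    · filter_upwards with y
      have htri : ‖x‖ ≤ ‖y‖ + ‖x - y‖ := by
        calc ‖x‖ = ‖y + (x - y)‖ := by congr 1; abel
          _ ≤ ‖y‖ + ‖x - y‖ := norm_add_le _ _
      rcases le_total ‖y‖ ‖x - y‖ with h | h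
      · have hkey : (1 + ‖x - y‖) ^ (-t) ≤ 2 ^ t * (1 + ‖x‖) ^ (-t) :=
          key_bound htpos (norm_nonneg x) (by linarith) (norm_nonneg _)
        have h1 : (0:ℝ) ≤ (1 + ‖y‖) ^ (-t) := by positivity
        have h2 : (0:ℝ) ≤ 2 ^ t * (1 + ‖x‖) ^ (-t) := by positivity
        have h3 : (0:ℝ) ≤ (1 + ‖x - y‖) ^ (-t) := by positivity
        calc (1 + ‖y‖) ^ (-t) * (1 + ‖x - y‖) ^ (-t)
            ≤ (1 + ‖y‖) ^ (-t) * (2 ^ t * (1 + ‖x‖) ^ (-t)) :=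
              mul_le_mul_of_nonneg_left hkey h1
          _ ≤ 2 ^ t * (1 + ‖x‖) ^ (-t) * ((1 + ‖y‖) ^ (-t) + (1 + ‖x - y‖) ^ (-t)) := by
              nlinarith
      · have hkey : (1 + ‖y‖) ^ (-t) ≤ 2 ^ t * (1 + ‖x‖) ^ (-t) :=
          key_bound htpos (norm_nonneg x) (by linarith) (norm_nonneg _)
        have h1 : (0:ℝ) ≤ (1 + ‖x - y‖) ^ (-t) := by positivity
        have h2 : (0:ℝ) ≤ 2 ^ t * (1 + ‖x‖) ^ (-t) := by positivity
        have h3 : (0:ℝ) ≤ (1 + ‖y‖) ^ (-t) := by positivity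
        calc (1 + ‖y‖) ^ (-t) * (1 + ‖x - y‖) ^ (-t)
            ≤ (2 ^ t * (1 + ‖x‖) ^ (-t)) * (1 + ‖x - y‖) ^ (-t) :=
              mul_le_mul_of_nonneg_right hkey h1
          _ ≤ 2 ^ t * (1 + ‖x‖) ^ (-t) * ((1 + ‖y‖) ^ (-t) + (1 + ‖x - y‖) ^ (-t)) := by
              nlinarith
  have hval : (∫ y : EuclideanSpace ℝ (Fin d),
      2 ^ t * (1 + ‖x‖) ^ (-t) * ((1 + ‖y‖) ^ (-t) + (1 + ‖x - y‖) ^ (-t)))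
      = 2 ^ t * (2 * C) * (1 + ‖x‖) ^ (-t) := by
    rw [integral_const_mul, integral_add hC hC2]
    have h2 : (∫ y : EuclideanSpace ℝ (Fin d), (1 + ‖x - y‖) ^ (-t)) = C := by
      rw [hCdef]
      exact integral_sub_left_eq_self (fun y : EuclideanSpace ℝ (Fin d) => (1 + ‖y‖) ^ (-t)) volume x
    rw [h2, ← hCdef]
    ring
  linarith [hmono, le_of_eq hval]
end

section
/- Let Γ ⊆ ℝ^d be relatively separated and t > d. Then for all x ∈ ℝ^d, ∑_{γ ∈ Γ} (1+|γ|)^{-t}(1+|x-γ|)^{-t} ≤ K·rel(Γ)·(1+|x|)^{-t} for a constant K depending only on t and d. -/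
set_option maxHeartbeats 1000000


open MeasureTheory

section Aux

private lemma aux_nat_summable (p : ℝ) (hp : 1 < p) :
    Summable (fun k : ℕ => ((k : ℝ) + 1) ^ (-p)) := by
  have h : Summable (fun n : ℕ => (n : ℝ) ^ (-p)) :=
    Real.summable_nat_rpow.mpr (by linarith)
  have h2 := (summable_nat_add_iff 1).mpr h
  refine h2.congr fun k => ?_
  push_cast
  norm_num

private lemma aux_g_nonneg (p : ℝ) (k : ℕ) : 0 ≤ ((k : ℝ) + 1) ^ (-p) := by
  positivity

/-- 1-dimensional tail bound: any finite sum of `(1+|m|)^{-p}` over integers is bounded. -/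
private lemma aux_int_sum_le (p : ℝ) (hp : 1 < p) (B : Finset ℤ) :
    ∑ m ∈ B, ((1 : ℝ) + |(m : ℝ)|) ^ (-p) ≤ 2 * ∑' k : ℕ, ((k : ℝ) + 1) ^ (-p) := by
  classical
  set g : ℕ → ℝ := fun k => ((k : ℝ) + 1) ^ (-p) with hg
  have hsum : Summable g := aux_nat_summable p hp
  have hp0 : -p ≤ 0 := by linarith
  rw [two_mul, ← Finset.sum_filter_add_sum_filter_not B (fun m => 0 ≤ m)]
  have h1 : ∑ m ∈ B.filter (fun m => 0 ≤ m), ((1 : ℝ) + |(m : ℝ)|) ^ (-p)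
      ≤ ∑' k : ℕ, g k := by
    have heq : ∑ m ∈ B.filter (fun m => 0 ≤ m), ((1 : ℝ) + |(m : ℝ)|) ^ (-p)
        = ∑ m ∈ B.filter (fun m => 0 ≤ m), g m.toNat := by
      refine Finset.sum_congr rfl fun m hm => ?_
      have hm0 : (0 : ℤ) ≤ m := (Finset.mem_filter.mp hm).2
      have : ((m.toNat : ℝ)) = (m : ℝ) := by
        exact_mod_cast congrArg (Int.cast : ℤ → ℝ) (Int.toNat_of_nonneg hm0)
      rw [hg]; simp only []
      rw [this, abs_of_nonneg (by exact_mod_cast hm0), add_comm]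
    rw [heq]
    have hinj : ∀ x ∈ B.filter (fun m => 0 ≤ m), ∀ y ∈ B.filter (fun m => 0 ≤ m),
        x.toNat = y.toNat → x = y := by
      intro x hx y hy hxy
      have hx0 := (Finset.mem_filter.mp hx).2
      have hy0 := (Finset.mem_filter.mp hy).2
      omega
    rw [← Finset.sum_image (f := g) hinj]
    exact Summable.sum_le_tsum _ (fun k _ => aux_g_nonneg p k) hsum
  have h2 : ∑ m ∈ B.filter (fun m => ¬ 0 ≤ m), ((1 : ℝ) + |(m : ℝ)|) ^ (-p)
      ≤ ∑' k : ℕ, g k := by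
    have hle : ∀ m ∈ B.filter (fun m => ¬ 0 ≤ m),
        ((1 : ℝ) + |(m : ℝ)|) ^ (-p) ≤ g (-1 - m).toNat := by
      intro m hm
      have hm0 : m < 0 := by
        have := (Finset.mem_filter.mp hm).2
        omega
      have hcast : (((-1 - m).toNat : ℝ)) = -1 - (m : ℝ) := by
        have : ((-1 - m).toNat : ℤ) = -1 - m := Int.toNat_of_nonneg (by omega)
        exact_mod_cast congrArg (Int.cast : ℤ → ℝ) this
      have habs : |(m : ℝ)| = -(m : ℝ) := by
        apply abs_of_neg; exact_mod_cast hm0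
      have hpos : (0 : ℝ) < -(m : ℝ) := by
        have : (m : ℝ) < 0 := by exact_mod_cast hm0
        linarith
      have : ((1 : ℝ) + |(m : ℝ)|) ^ (-p) ≤ (-(m : ℝ)) ^ (-p) := by
        apply Real.rpow_le_rpow_of_nonpos hpos (by rw [habs]; linarith) hp0
      calc ((1 : ℝ) + |(m : ℝ)|) ^ (-p) ≤ (-(m : ℝ)) ^ (-p) := this
        _ = g (-1 - m).toNat := by rw [hg]; simp only []; rw [hcast]; ring_nf
    calc ∑ m ∈ B.filter (fun m => ¬ 0 ≤ m), ((1 : ℝ) + |(m : ℝ)|) ^ (-p)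
        ≤ ∑ m ∈ B.filter (fun m => ¬ 0 ≤ m), g (-1 - m).toNat :=
          Finset.sum_le_sum hle
      _ = ∑ k ∈ (B.filter (fun m => ¬ 0 ≤ m)).image (fun m => (-1 - m).toNat), g k := by
          refine (Finset.sum_image ?_).symm
          intro x hx y hy hxy
          have hx0 := (Finset.mem_filter.mp hx).2
          have hy0 := (Finset.mem_filter.mp hy).2
          beta_reduce at hxy
          omega
      _ ≤ ∑' k : ℕ, g k := Summable.sum_le_tsum _ (fun k _ => aux_g_nonneg p k) hsum
  exact add_le_add h1 h2

/-- d-dimensional tail bound over any finite set of lattice points. -/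
private lemma aux_pi_sum_le (d : ℕ) (p : ℝ) (hp : 1 < p) (T : Finset (Fin d → ℤ)) :
    ∑ n ∈ T, ∏ i, ((1 : ℝ) + |(n i : ℝ)|) ^ (-p)
      ≤ (2 * ∑' k : ℕ, ((k : ℝ) + 1) ^ (-p)) ^ d := by
  classical
  set S1 : ℝ := 2 * ∑' k : ℕ, ((k : ℝ) + 1) ^ (-p) with hS1
  have hsub : T ⊆ Fintype.piFinset (fun i => (T.image (fun n => n i) : Finset ℤ)) := by
    intro n hn
    exact Fintype.mem_piFinset.mpr fun i => Finset.mem_image_of_mem _ hn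
  calc ∑ n ∈ T, ∏ i, ((1 : ℝ) + |(n i : ℝ)|) ^ (-p)
      ≤ ∑ n ∈ Fintype.piFinset (fun i => (T.image (fun n => n i) : Finset ℤ)),
          ∏ i, ((1 : ℝ) + |(n i : ℝ)|) ^ (-p) := by
        refine Finset.sum_le_sum_of_subset_of_nonneg hsub fun n _ _ => ?_
        positivity
    _ = ∏ i : Fin d, ∑ m ∈ (T.image (fun n => n i) : Finset ℤ), ((1 : ℝ) + |(m : ℝ)|) ^ (-p) :=
        (Finset.prod_univ_sum (fun i => (T.image (fun n => n i) : Finset ℤ))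
          (fun _i m => ((1 : ℝ) + |(m : ℝ)|) ^ (-p))).symm
    _ ≤ ∏ _i : Fin d, S1 := by
        refine Finset.prod_le_prod (fun i _ => ?_) (fun i _ => ?_)
        · positivity
        · exact aux_int_sum_le p hp _
    _ = S1 ^ d := by simp [Finset.prod_const]

private lemma aux_coord_le_norm {d : ℕ} (y : EuclideanSpace ℝ (Fin d)) (i : Fin d) :
    |y i| ≤ ‖y‖ := by
  rw [EuclideanSpace.norm_eq]
  have h1 : |y i| = Real.sqrt (‖y i‖ ^ 2) := by
    rw [Real.sqrt_sq_eq_abs, Real.norm_eq_abs, abs_abs]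
  rw [h1]
  apply Real.sqrt_le_sqrt
  exact Finset.single_le_sum (f := fun j => ‖y j‖ ^ 2) (fun j _ => by positivity)
    (Finset.mem_univ i)

/-- Key counting lemma: a finite sum of `(1+‖z-γ‖)^{-t}` over points of a relatively
separated set is bounded uniformly in `z`. -/
private lemma aux_sum_cube (d : ℕ) (t p : ℝ) (hp : 1 < p) (hpt : (d : ℝ) * p = t)
    (Γ : Set (EuclideanSpace ℝ (Fin d))) (R : ℕ)
    (hfin : ∀ x : EuclideanSpace ℝ (Fin d),
      (Γ ∩ {y | ∀ i, y i - x i ∈ Set.Icc (0 : ℝ) 1}).Finite)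
    (hcount : ∀ x : EuclideanSpace ℝ (Fin d),
      (Γ ∩ {y | ∀ i, y i - x i ∈ Set.Icc (0 : ℝ) 1}).ncard ≤ R)
    (z : EuclideanSpace ℝ (Fin d)) (F : Finset Γ) :
    ∑ γ ∈ F, (1 + ‖z - (γ : EuclideanSpace ℝ (Fin d))‖) ^ (-t)
      ≤ (2 : ℝ) ^ t * (2 * ∑' k : ℕ, ((k : ℝ) + 1) ^ (-p)) ^ d * R := by
  classical
  set S1 : ℝ := 2 * ∑' k : ℕ, ((k : ℝ) + 1) ^ (-p) with hS1
  have hp0 : 0 < p := by linarith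
  have ht0 : 0 ≤ t := by
    rw [← hpt]; positivity
  set ν : Γ → (Fin d → ℤ) := fun γ i => ⌊(γ : EuclideanSpace ℝ (Fin d)) i - z i⌋ with hν
  -- pointwise bound on each fiber
  have hpoint : ∀ γ : Γ, (1 + ‖z - (γ : EuclideanSpace ℝ (Fin d))‖) ^ (-t)
      ≤ (2 : ℝ) ^ t * ∏ i, ((1 : ℝ) + |(ν γ i : ℝ)|) ^ (-p) := by
    intro γ
    set X : ℝ := ‖z - (γ : EuclideanSpace ℝ (Fin d))‖ with hX
    have hX0 : 0 ≤ X := norm_nonneg _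
    have key : ∀ i : Fin d, ((2 : ℝ) * (1 + X)) ^ (-p) ≤ ((1 : ℝ) + |(ν γ i : ℝ)|) ^ (-p) := by
      intro i
      have h1 : |(γ : EuclideanSpace ℝ (Fin d)) i - z i| ≤ X := by
        have := aux_coord_le_norm (z - (γ : EuclideanSpace ℝ (Fin d))) i
        rw [PiLp.sub_apply] at this
        rw [abs_sub_comm]
        exact this
      have hfl : |((ν γ i : ℤ) : ℝ)| ≤ |(γ : EuclideanSpace ℝ (Fin d)) i - z i| + 1 := by
        set a : ℝ := (γ : EuclideanSpace ℝ (Fin d)) i - z i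
        have hle : (⌊a⌋ : ℝ) ≤ a := Int.floor_le a
        have hgt : a - 1 < (⌊a⌋ : ℝ) := Int.sub_one_lt_floor a
        rw [abs_le]
        constructor
        · have : -|a| ≤ a := neg_abs_le a
          simp only [hν]
          linarith
        · have : a ≤ |a| := le_abs_self a
          simp only [hν]
          linarith
      have h2 : (1 : ℝ) + |(ν γ i : ℝ)| ≤ 2 * (1 + X) := by
        have := hfl.trans (by linarith : |(γ : EuclideanSpace ℝ (Fin d)) i - z i| + 1 ≤ X + 1)
        linarith
      exact Real.rpow_le_rpow_of_nonpos (by positivity) h2 (by linarith)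
    have hprod : ((2 : ℝ) * (1 + X)) ^ (-t)
        ≤ ∏ i, ((1 : ℝ) + |(ν γ i : ℝ)|) ^ (-p) := by
      have : ∏ _i : Fin d, ((2 : ℝ) * (1 + X)) ^ (-p)
          ≤ ∏ i, ((1 : ℝ) + |(ν γ i : ℝ)|) ^ (-p) := by
        refine Finset.prod_le_prod (fun i _ => by positivity) (fun i _ => key i)
      calc ((2 : ℝ) * (1 + X)) ^ (-t)
          = (((2 : ℝ) * (1 + X)) ^ (-p)) ^ (d : ℕ) := by
            rw [← Real.rpow_natCast (((2 : ℝ) * (1 + X)) ^ (-p)) d,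
              ← Real.rpow_mul (by positivity)]
            congr 1
            rw [← hpt]; ring
        _ = ∏ _i : Fin d, ((2 : ℝ) * (1 + X)) ^ (-p) := by
            simp [Finset.prod_const]
        _ ≤ _ := this
    have hmul : ((2 : ℝ) * (1 + X)) ^ (-t) = 2 ^ (-t) * (1 + X) ^ (-t) :=
      Real.mul_rpow (by norm_num) (by linarith)
    have h2t : (2 : ℝ) ^ t * (2 : ℝ) ^ (-t) = 1 := by
      rw [← Real.rpow_add (by norm_num)]
      simp
    calc (1 + X) ^ (-t) = (2 : ℝ) ^ t * ((2 : ℝ) ^ (-t) * (1 + X) ^ (-t)) := by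
          rw [← mul_assoc, h2t, one_mul]
      _ = (2 : ℝ) ^ t * ((2 : ℝ) * (1 + X)) ^ (-t) := by rw [hmul]
      _ ≤ (2 : ℝ) ^ t * ∏ i, ((1 : ℝ) + |(ν γ i : ℝ)|) ^ (-p) := by
          have h2pos : (0 : ℝ) ≤ (2 : ℝ) ^ t := by positivity
          exact mul_le_mul_of_nonneg_left hprod h2pos
  -- fiber cardinality bound
  have hcard : ∀ n : Fin d → ℤ, (F.filter (fun γ => ν γ = n)).card ≤ R := by
    intro n
    set x₀ : EuclideanSpace ℝ (Fin d) := (WithLp.equiv 2 (Fin d → ℝ)).symm (fun i => z i + (n i : ℝ)) with hx₀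
    have hx₀i : ∀ i, x₀ i = z i + (n i : ℝ) := fun i => rfl
    have hsub : (((F.filter (fun γ => ν γ = n)).image (Subtype.val)) : Set (EuclideanSpace ℝ (Fin d)))
        ⊆ Γ ∩ {y | ∀ i, y i - x₀ i ∈ Set.Icc (0 : ℝ) 1} := by
      intro y hy
      simp only [Finset.coe_image, Set.mem_image, Finset.mem_coe,
        Finset.mem_filter] at hy
      obtain ⟨γ, ⟨_, hγn⟩, rfl⟩ := hy
      refine ⟨γ.2, fun i => ?_⟩
      have hni : (n i : ℝ) = (⌊(γ : EuclideanSpace ℝ (Fin d)) i - z i⌋ : ℝ) := by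
        rw [← hγn]
      rw [hx₀i i]
      constructor
      · have := Int.floor_le ((γ : EuclideanSpace ℝ (Fin d)) i - z i)
        rw [hni]; simp only []; linarith
      · have := Int.lt_floor_add_one ((γ : EuclideanSpace ℝ (Fin d)) i - z i)
        rw [hni]; simp only []; linarith
    have hcard1 : (F.filter (fun γ => ν γ = n)).card
        = ((F.filter (fun γ => ν γ = n)).image (Subtype.val)).card :=
      (Finset.card_image_of_injective _ Subtype.val_injective).symm
    rw [hcard1]
    calc ((F.filter (fun γ => ν γ = n)).image (Subtype.val)).card
        = (((F.filter (fun γ => ν γ = n)).image (Subtype.val) : Finset (EuclideanSpace ℝ (Fin d))) : Set (EuclideanSpace ℝ (Fin d))).ncard :=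
          (Set.ncard_coe_finset _).symm
      _ ≤ (Γ ∩ {y | ∀ i, y i - x₀ i ∈ Set.Icc (0 : ℝ) 1}).ncard :=
          Set.ncard_le_ncard hsub (hfin x₀)
      _ ≤ R := hcount x₀
  -- assemble
  have hmaps : ∀ γ ∈ F, ν γ ∈ F.image ν := fun γ hγ => Finset.mem_image_of_mem ν hγ
  rw [← Finset.sum_fiberwise_of_maps_to hmaps (fun γ => (1 + ‖z - (γ : EuclideanSpace ℝ (Fin d))‖) ^ (-t))]
  have hfiber : ∀ n ∈ F.image ν,
      ∑ γ ∈ F.filter (fun γ => ν γ = n), (1 + ‖z - (γ : EuclideanSpace ℝ (Fin d))‖) ^ (-t)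
        ≤ (R : ℝ) * ((2 : ℝ) ^ t * ∏ i, ((1 : ℝ) + |(n i : ℝ)|) ^ (-p)) := by
    intro n _
    have hb : ∀ γ ∈ F.filter (fun γ => ν γ = n), (1 + ‖z - (γ : EuclideanSpace ℝ (Fin d))‖) ^ (-t)
        ≤ (2 : ℝ) ^ t * ∏ i, ((1 : ℝ) + |(n i : ℝ)|) ^ (-p) := by
      intro γ hγ
      have hγn : ν γ = n := (Finset.mem_filter.mp hγ).2
      have := hpoint γ
      rwa [hγn] at this
    calc ∑ γ ∈ F.filter (fun γ => ν γ = n), (1 + ‖z - (γ : EuclideanSpace ℝ (Fin d))‖) ^ (-t)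
        ≤ (F.filter (fun γ => ν γ = n)).card
            • ((2 : ℝ) ^ t * ∏ i, ((1 : ℝ) + |(n i : ℝ)|) ^ (-p)) :=
          Finset.sum_le_card_nsmul _ _ _ hb
      _ ≤ R • ((2 : ℝ) ^ t * ∏ i, ((1 : ℝ) + |(n i : ℝ)|) ^ (-p)) := by
          apply nsmul_le_nsmul_left (by positivity) (hcard n)
      _ = (R : ℝ) * ((2 : ℝ) ^ t * ∏ i, ((1 : ℝ) + |(n i : ℝ)|) ^ (-p)) := by
          rw [nsmul_eq_mul]
  calc ∑ n ∈ F.image ν, ∑ γ ∈ F.filter (fun γ => ν γ = n), (1 + ‖z - (γ : EuclideanSpace ℝ (Fin d))‖) ^ (-t)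
      ≤ ∑ n ∈ F.image ν, (R : ℝ) * ((2 : ℝ) ^ t * ∏ i, ((1 : ℝ) + |(n i : ℝ)|) ^ (-p)) :=
        Finset.sum_le_sum hfiber
    _ = (R : ℝ) * (2 : ℝ) ^ t * ∑ n ∈ F.image ν, ∏ i, ((1 : ℝ) + |(n i : ℝ)|) ^ (-p) := by
        rw [Finset.mul_sum]
        refine Finset.sum_congr rfl fun n _ => by ring
    _ ≤ (R : ℝ) * (2 : ℝ) ^ t * S1 ^ d := by
        have hnn : (0 : ℝ) ≤ (R : ℝ) * (2 : ℝ) ^ t := by positivity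
        exact mul_le_mul_of_nonneg_left (aux_pi_sum_le d p hp _) hnn
    _ = (2 : ℝ) ^ t * S1 ^ d * R := by ring

/-- Pointwise subconvolutivity, asymmetric form. -/
private lemma aux_subconv_half (t a b c : ℝ) (ht : 0 ≤ t) (hb : 0 ≤ b)
    (h : 1 + c ≤ 2 * (1 + a)) (hc : 0 ≤ c) :
    (1 + a) ^ (-t) * (1 + b) ^ (-t)
      ≤ (2 : ℝ) ^ t * (1 + c) ^ (-t) * ((1 + a) ^ (-t) + (1 + b) ^ (-t)) := by
  have h1 : (1 + a) ^ (-t) ≤ ((1 + c) / 2) ^ (-t) := by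
    apply Real.rpow_le_rpow_of_nonpos (by positivity) (by linarith) (by linarith)
  have h2 : ((1 + c) / 2) ^ (-t) = (2 : ℝ) ^ t * (1 + c) ^ (-t) := by
    rw [Real.div_rpow (by linarith) (by norm_num), Real.rpow_neg (by norm_num : (0:ℝ) ≤ 2)]
    field_simp
  have h3 : (1 + a) ^ (-t) ≤ (2 : ℝ) ^ t * (1 + c) ^ (-t) := h2 ▸ h1
  have hb' : (0 : ℝ) ≤ (1 + b) ^ (-t) := by positivity
  calc (1 + a) ^ (-t) * (1 + b) ^ (-t)
      ≤ ((2 : ℝ) ^ t * (1 + c) ^ (-t)) * (1 + b) ^ (-t) :=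
        mul_le_mul_of_nonneg_right h3 hb'
    _ ≤ (2 : ℝ) ^ t * (1 + c) ^ (-t) * ((1 + a) ^ (-t) + (1 + b) ^ (-t)) := by
        have : (0 : ℝ) ≤ (2 : ℝ) ^ t * (1 + c) ^ (-t) := by positivity
        have h4 : (1 + b) ^ (-t) ≤ (1 + a) ^ (-t) + (1 + b) ^ (-t) := le_add_of_nonneg_left (Real.rpow_nonneg (by linarith) _)
        exact mul_le_mul_of_nonneg_left h4 this

private lemma aux_subconv (t a b c : ℝ) (ht : 0 ≤ t) (ha : 0 ≤ a) (hb : 0 ≤ b)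
    (hc : 0 ≤ c) (htri : c ≤ a + b) :
    (1 + a) ^ (-t) * (1 + b) ^ (-t)
      ≤ (2 : ℝ) ^ t * (1 + c) ^ (-t) * ((1 + a) ^ (-t) + (1 + b) ^ (-t)) := by
  rcases le_total b a with h | h
  · exact aux_subconv_half t a b c ht hb (by linarith) hc
  · have := aux_subconv_half t b a c ht ha (by linarith) hc
    calc (1 + a) ^ (-t) * (1 + b) ^ (-t) = (1 + b) ^ (-t) * (1 + a) ^ (-t) := by ring
      _ ≤ (2 : ℝ) ^ t * (1 + c) ^ (-t) * ((1 + b) ^ (-t) + (1 + a) ^ (-t)) := this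
      _ = (2 : ℝ) ^ t * (1 + c) ^ (-t) * ((1 + a) ^ (-t) + (1 + b) ^ (-t)) := by ring

end Aux

/-- Discrete subconvolutivity: for `Γ ⊆ ℝ^d` relatively separated with `rel(Γ) ≤ R`
and `t > d`, `∑_{γ∈Γ} (1+|γ|)^{-t}(1+|x-γ|)^{-t} ≤ K·R·(1+|x|)^{-t}` with `K = K(t,d)`. -/
theorem sum_polynomial_weight_subconvolutive (d : ℕ) (t : ℝ) (ht : (d : ℝ) < t) :
    ∃ K > (0 : ℝ), ∀ (Γ : Set (EuclideanSpace ℝ (Fin d))) (R : ℕ),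
      (∀ x : EuclideanSpace ℝ (Fin d),
        (Γ ∩ {y | ∀ i, y i - x i ∈ Set.Icc (0:ℝ) 1}).Finite) →
      (∀ x : EuclideanSpace ℝ (Fin d),
        (Γ ∩ {y | ∀ i, y i - x i ∈ Set.Icc (0:ℝ) 1}).ncard ≤ R) →
      ∀ x : EuclideanSpace ℝ (Fin d),
        ∑' γ : Γ, (1 + ‖(γ : EuclideanSpace ℝ (Fin d))‖) ^ (-t) *
            (1 + ‖x - (γ : EuclideanSpace ℝ (Fin d))‖) ^ (-t)
          ≤ K * R * (1 + ‖x‖) ^ (-t) := by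
  classical
  rcases Nat.eq_zero_or_pos d with hd | hd
  · -- degenerate case d = 0
    subst hd
    refine ⟨1, one_pos, fun Γ R hfin hcount x => ?_⟩
    have hnorm : ∀ v : EuclideanSpace ℝ (Fin 0), ‖v‖ = 0 := by
      intro v
      rw [EuclideanSpace.norm_eq]
      simp
    have huniv : {y : EuclideanSpace ℝ (Fin 0) | ∀ i, y i - (0 : EuclideanSpace ℝ (Fin 0)) i ∈ Set.Icc (0 : ℝ) 1} = Set.univ := by
      ext y
      simp only [Set.mem_setOf_eq, Set.mem_univ, iff_true]
      intro i
      exact i.elim0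
    have hΓfin : Γ.Finite := by
      have := hfin 0
      rwa [huniv, Set.inter_univ] at this
    have hΓcard : Γ.ncard ≤ R := by
      have := hcount 0
      rwa [huniv, Set.inter_univ] at this
    have hterm : ∀ γ : Γ, (1 + ‖(γ : EuclideanSpace ℝ (Fin 0))‖) ^ (-t) * (1 + ‖x - (γ : EuclideanSpace ℝ (Fin 0))‖) ^ (-t) = 1 := by
      intro γ
      rw [hnorm, hnorm, add_zero, Real.one_rpow, one_mul]
    calc ∑' γ : Γ, (1 + ‖(γ : EuclideanSpace ℝ (Fin 0))‖) ^ (-t) * (1 + ‖x - (γ : EuclideanSpace ℝ (Fin 0))‖) ^ (-t)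
        = ∑' _γ : Γ, (1 : ℝ) := tsum_congr hterm
      _ = Nat.card Γ • (1 : ℝ) := tsum_const 1
      _ = (Γ.ncard : ℝ) := by rw [Nat.card_coe_set_eq]; simp
      _ ≤ (R : ℝ) := by exact_mod_cast hΓcard
      _ = 1 * R * (1 + ‖x‖) ^ (-t) := by rw [hnorm, add_zero, Real.one_rpow]; ring
  · -- main case d ≥ 1
    set p : ℝ := t / d with hpdef
    have hd0 : (0 : ℝ) < d := by exact_mod_cast hd
    have hp : 1 < p := by
      rw [hpdef, lt_div_iff₀ hd0]
      have : (1 : ℝ) ≤ (d : ℝ) := by exact_mod_cast hd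
      linarith
    have hpt : (d : ℝ) * p = t := by
      rw [hpdef]; field_simp
    have ht0 : 0 < t := by
      have : (0 : ℝ) ≤ (d : ℝ) := by positivity
      linarith
    set S1 : ℝ := 2 * ∑' k : ℕ, ((k : ℝ) + 1) ^ (-p) with hS1
    have hS1pos : 0 < S1 := by
      have hsum := aux_nat_summable p hp
      have h0 : (1 : ℝ) ≤ ∑' k : ℕ, ((k : ℝ) + 1) ^ (-p) := by
        have := Summable.le_tsum hsum 0 (fun j _ => aux_g_nonneg p j)
        simpa using this
      rw [hS1]; linarith
    refine ⟨2 ^ (2 * t + 1) * S1 ^ d, by positivity, fun Γ R hfin hcount x => ?_⟩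
    apply tsum_le_of_sum_le' (by positivity)
    intro s
    have hstep1 : ∀ γ : Γ, (1 + ‖(γ : EuclideanSpace ℝ (Fin d))‖) ^ (-t) * (1 + ‖x - (γ : EuclideanSpace ℝ (Fin d))‖) ^ (-t)
        ≤ (2 : ℝ) ^ t * (1 + ‖x‖) ^ (-t)
            * ((1 + ‖(γ : EuclideanSpace ℝ (Fin d))‖) ^ (-t) + (1 + ‖x - (γ : EuclideanSpace ℝ (Fin d))‖) ^ (-t)) := by
      intro γ
      apply aux_subconv t _ _ _ ht0.le (norm_nonneg _) (norm_nonneg _) (norm_nonneg _)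
      have := norm_add_le (γ : EuclideanSpace ℝ (Fin d)) (x - (γ : EuclideanSpace ℝ (Fin d)))
      rwa [add_sub_cancel] at this
    have hz1 : ∑ γ ∈ s, (1 + ‖(γ : EuclideanSpace ℝ (Fin d))‖) ^ (-t) ≤ (2 : ℝ) ^ t * S1 ^ d * R := by
      have heq : ∀ γ : Γ, (1 + ‖(γ : EuclideanSpace ℝ (Fin d))‖) ^ (-t) = (1 + ‖(0 : EuclideanSpace ℝ (Fin d)) - (γ : EuclideanSpace ℝ (Fin d))‖) ^ (-t) := by
        intro γ; rw [zero_sub, norm_neg]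
      calc ∑ γ ∈ s, (1 + ‖(γ : EuclideanSpace ℝ (Fin d))‖) ^ (-t)
          = ∑ γ ∈ s, (1 + ‖(0 : EuclideanSpace ℝ (Fin d)) - (γ : EuclideanSpace ℝ (Fin d))‖) ^ (-t) :=
            Finset.sum_congr rfl fun γ _ => heq γ
        _ ≤ (2 : ℝ) ^ t * S1 ^ d * R := aux_sum_cube d t p hp hpt Γ R hfin hcount 0 s
    have hz2 : ∑ γ ∈ s, (1 + ‖x - (γ : EuclideanSpace ℝ (Fin d))‖) ^ (-t) ≤ (2 : ℝ) ^ t * S1 ^ d * R :=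
      aux_sum_cube d t p hp hpt Γ R hfin hcount x s
    have h2t : (2 : ℝ) ^ (2 * t + 1) = 2 ^ t * 2 ^ t * 2 := by
      rw [show 2 * t + 1 = t + t + 1 by ring, Real.rpow_add (by norm_num),
        Real.rpow_add (by norm_num), Real.rpow_one]
    calc ∑ γ ∈ s, (1 + ‖(γ : EuclideanSpace ℝ (Fin d))‖) ^ (-t) * (1 + ‖x - (γ : EuclideanSpace ℝ (Fin d))‖) ^ (-t)
        ≤ ∑ γ ∈ s, (2 : ℝ) ^ t * (1 + ‖x‖) ^ (-t)
            * ((1 + ‖(γ : EuclideanSpace ℝ (Fin d))‖) ^ (-t) + (1 + ‖x - (γ : EuclideanSpace ℝ (Fin d))‖) ^ (-t)) :=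
          Finset.sum_le_sum fun γ _ => hstep1 γ
      _ = (2 : ℝ) ^ t * (1 + ‖x‖) ^ (-t)
            * (∑ γ ∈ s, (1 + ‖(γ : EuclideanSpace ℝ (Fin d))‖) ^ (-t) + ∑ γ ∈ s, (1 + ‖x - (γ : EuclideanSpace ℝ (Fin d))‖) ^ (-t)) := by
          rw [← Finset.mul_sum, Finset.sum_add_distrib]
      _ ≤ (2 : ℝ) ^ t * (1 + ‖x‖) ^ (-t)
            * ((2 : ℝ) ^ t * S1 ^ d * R + (2 : ℝ) ^ t * S1 ^ d * R) := by
          have hnn : (0 : ℝ) ≤ (2 : ℝ) ^ t * (1 + ‖x‖) ^ (-t) := by positivity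
          exact mul_le_mul_of_nonneg_left (add_le_add hz1 hz2) hnn
      _ = 2 ^ (2 * t + 1) * S1 ^ d * R * (1 + ‖x‖) ^ (-t) := by
          rw [h2t]; ring
end

section
/- Let s > d, α ≥ 0, and let Λ ⊆ ℝ^d be relatively separated. Suppose {g_k}_{k∈Λ} and {f_k}_{k∈Λ} satisfy |g_k(z)|, |f_k(z)| ≤ C(1+|z-k|)^{-(s+α)}, and let x₀ ∈ ℝ^d and K_{x₀} := ∑_{k∈Λ} \overline{g_k}(x₀) f_k (convergent pointwise). Then |K_{x₀}(z)| ≤ C' · rel(Λ) · (1+|z-x₀|)^{-(s+α)} for all z, where C' depends only on C, s, α, d. -/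
open ComplexConjugate

open scoped ENNReal

namespace RKD

lemma rpow_neg_anti {x y t : ℝ} (hx : 0 < x) (hxy : x ≤ y) (ht : 0 ≤ t) :
    y ^ (-t) ≤ x ^ (-t) :=
  Real.rpow_le_rpow_of_nonpos hx hxy (neg_nonpos.mpr ht)

lemma rpow_neg_scaled {x y c t : ℝ} (hx : 0 < x) (hc : 0 < c) (h : x ≤ c * y) (ht : 0 ≤ t) :
    y ^ (-t) ≤ c ^ t * x ^ (-t) := by
  have hy : 0 < y := by nlinarith
  have h1 : x / c ≤ y := (div_le_iff₀ hc).mpr (by rw [mul_comm]; exact h)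
  calc y ^ (-t) ≤ (x / c) ^ (-t) := rpow_neg_anti (div_pos hx hc) h1 ht
    _ = c ^ t * x ^ (-t) := by
        rw [Real.div_rpow hx.le hc.le, Real.rpow_neg hc.le]; field_simp

lemma summable_int_aux {t : ℝ} (ht : 1 < t) :
    Summable (fun j : ℤ => ((1:ℝ) + |(j:ℝ)|) ^ (-t)) := by
  have h0 : Summable (fun n : ℕ => ((n:ℝ)) ^ (-t)) :=
    Real.summable_nat_rpow.mpr (by linarith)
  have hnat : Summable (fun n : ℕ => ((1:ℝ) + (n:ℝ)) ^ (-t)) := by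
    have h1 := (summable_nat_add_iff 1).mpr h0
    exact h1.congr (fun n => by push_cast; rw [add_comm])
  refine Summable.of_nat_of_neg (hnat.congr fun n => ?_) (hnat.congr fun n => ?_) <;> simp

lemma oneDim {t : ℝ} (ht : 1 < t) :
    ∃ M : ℝ≥0∞, M ≠ ⊤ ∧ ∀ c : ℝ,
      (∑' m : ℤ, ENNReal.ofReal ((1 + |c - (m:ℝ)|) ^ (-t))) ≤ M := by
  have ht0 : (0:ℝ) ≤ t := by linarith
  set S : ℤ → ℝ := fun j => ((1:ℝ) + |(j:ℝ)|) ^ (-t) with hS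
  have hSsum : Summable S := summable_int_aux ht
  have hSnn : ∀ j, (0:ℝ) ≤ S j := fun j => Real.rpow_nonneg (by positivity) _
  refine ⟨∑' j : ℤ, ENNReal.ofReal (2 ^ t * S j), ?_, ?_⟩
  · rw [← ENNReal.ofReal_tsum_of_nonneg (fun j => by positivity) (hSsum.mul_left _)]
    exact ENNReal.ofReal_ne_top
  · intro c
    set n₀ : ℤ := ⌊c⌋ with hn₀
    have key : ∀ m : ℤ, (1 + |c - (m:ℝ)|) ^ (-t) ≤ 2 ^ t * S (m - n₀) := by
      intro m
      have h3 : |c - (n₀:ℝ)| ≤ 1 := by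
        rw [abs_of_nonneg (by linarith [Int.floor_le c])]
        linarith [Int.lt_floor_add_one c]
      have h1 : |((m:ℝ)) - n₀| ≤ |c - m| + 1 := by
        have h2 : ((m:ℝ)) - n₀ = (c - n₀) - (c - m) := by ring
        calc |((m:ℝ)) - n₀| ≤ |c - (n₀:ℝ)| + |c - (m:ℝ)| := by rw [h2]; exact abs_sub _ _
          _ ≤ |c - m| + 1 := by linarith
      have hx : (0:ℝ) < 1 + |((m - n₀ : ℤ):ℝ)| := by positivity
      have hle : 1 + |((m - n₀ : ℤ):ℝ)| ≤ 2 * (1 + |c - (m:ℝ)|) := by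
        push_cast
        have := abs_nonneg (c - (m:ℝ))
        linarith
      simpa [hS] using rpow_neg_scaled hx (by norm_num) hle ht0
    calc ∑' m : ℤ, ENNReal.ofReal ((1 + |c - (m:ℝ)|) ^ (-t))
        ≤ ∑' m : ℤ, ENNReal.ofReal (2 ^ t * S (m - n₀)) :=
          ENNReal.tsum_le_tsum fun m => ENNReal.ofReal_le_ofReal (key m)
      _ = ∑' j : ℤ, ENNReal.ofReal (2 ^ t * S j) :=
          (Equiv.subRight n₀).tsum_eq (fun j => ENNReal.ofReal (2 ^ t * S j))

noncomputable def toES (d : ℕ) (v : Fin d → ℝ) : EuclideanSpace ℝ (Fin d) :=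
  (WithLp.equiv 2 _).symm v

lemma coord_le_norm {d : ℕ} (v : EuclideanSpace ℝ (Fin d)) (i : Fin d) : |v i| ≤ ‖v‖ := by
  rw [EuclideanSpace.norm_eq, ← Real.sqrt_sq_eq_abs]
  apply Real.sqrt_le_sqrt
  have := Finset.single_le_sum (f := fun j => ‖v j‖ ^ 2) (fun j _ => sq_nonneg _)
    (Finset.mem_univ i)
  simpa [Real.norm_eq_abs, sq_abs] using this

lemma prod_bound {d : ℕ} (hd : 0 < d) {t : ℝ} (ht0 : 0 < t) {r : ℝ} (hr0 : 0 ≤ r)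
    (a : Fin d → ℝ) (ha : ∀ i, 0 ≤ a i) (hr : ∀ i, a i ≤ r) :
    (1 + r) ^ (-t) ≤ ∏ i, (1 + a i) ^ (-(t / d)) := by
  have hprodpos : (0:ℝ) < ∏ i, (1 + a i) ^ (t / d) :=
    Finset.prod_pos fun i _ => Real.rpow_pos_of_pos (by linarith [ha i]) _
  have hmain : ∏ i, (1 + a i) ^ (t / d) ≤ (1 + r) ^ t := by
    calc ∏ i, (1 + a i) ^ (t / d) ≤ ∏ _i : Fin d, (1 + r) ^ (t / d) :=
          Finset.prod_le_prod (fun i _ => (Real.rpow_pos_of_pos (by linarith [ha i]) _).le)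
            (fun i _ => Real.rpow_le_rpow (by linarith [ha i]) (by linarith [hr i]) (by positivity))
      _ = ((1 + r) ^ (t / d)) ^ (d:ℕ) := by
          rw [Finset.prod_const, Finset.card_univ, Fintype.card_fin]
      _ = (1 + r) ^ t := by
          rw [← Real.rpow_natCast ((1 + r) ^ (t / d)) d, ← Real.rpow_mul (by linarith)]
          congr 1
          field_simp
  have h1 : ∏ i, (1 + a i) ^ (-(t / d)) = (∏ i, (1 + a i) ^ (t / d))⁻¹ := by
    rw [← Finset.prod_inv_distrib]
    exact Finset.prod_congr rfl fun i _ => Real.rpow_neg (by linarith [ha i]) _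
  rw [h1, Real.rpow_neg (by linarith)]
  exact inv_anti₀ hprodpos hmain

lemma tsum_pi_prod : ∀ (d : ℕ) (h : Fin d → ℤ → ℝ≥0∞),
    ∑' n : Fin d → ℤ, ∏ i, h i (n i) = ∏ i, ∑' m : ℤ, h i m := by
  intro d
  induction d with
  | zero =>
    intro h
    simp only [Finset.univ_eq_empty, Finset.prod_empty]
    rw [tsum_eq_single (default : Fin 0 → ℤ) (fun b hb => absurd (Subsingleton.elim b default) hb)]
  | succ d ih =>
    intro h
    rw [← (Fin.consEquiv (fun _ : Fin (d+1) => ℤ)).tsum_eq]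
    calc ∑' p : ℤ × (Fin d → ℤ), ∏ i, h i ((Fin.consEquiv (fun _ => ℤ)) p i)
        = ∑' p : ℤ × (Fin d → ℤ), h 0 p.1 * ∏ i : Fin d, h i.succ (p.2 i) := by
          refine tsum_congr fun p => ?_
          rw [Fin.prod_univ_succ]
          simp [Fin.consEquiv]
      _ = ∑' a : ℤ, ∑' b : Fin d → ℤ, h 0 a * ∏ i : Fin d, h i.succ (b i) :=
          ENNReal.tsum_prod'
      _ = (∑' a : ℤ, h 0 a) * ∑' b : Fin d → ℤ, ∏ i : Fin d, h i.succ (b i) := by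
          simp_rw [ENNReal.tsum_mul_left, ENNReal.tsum_mul_right]
      _ = ∏ i : Fin (d+1), ∑' m : ℤ, h i m := by
          rw [ih (fun i => h i.succ), Fin.prod_univ_succ]

lemma gridSum {d : ℕ} {t : ℝ} (htd : (d:ℝ) < t) (ht0 : 0 < t) :
    ∃ M : ℝ≥0∞, M ≠ ⊤ ∧ ∀ x : EuclideanSpace ℝ (Fin d),
      ∑' n : Fin d → ℤ,
        ENNReal.ofReal ((1 + ‖x - toES d (fun i => (n i : ℝ))‖) ^ (-t)) ≤ M := by
  rcases Nat.eq_zero_or_pos d with hd | hd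
  · subst hd
    refine ⟨1, ENNReal.one_ne_top, fun x => ?_⟩
    rw [tsum_eq_single (default : Fin 0 → ℤ) (fun b hb => absurd (Subsingleton.elim b default) hb)]
    rw [ENNReal.ofReal_le_one]
    exact Real.rpow_le_one_of_one_le_of_nonpos (le_add_of_nonneg_right (norm_nonneg _)) (by linarith)
  · have h1 : 1 < t / d := (one_lt_div (by exact_mod_cast hd)).mpr htd
    obtain ⟨M₁, hM₁top, hM₁⟩ := oneDim h1
    refine ⟨M₁ ^ d, ENNReal.pow_ne_top hM₁top, fun x => ?_⟩
    have key : ∀ n : Fin d → ℤ,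
        ENNReal.ofReal ((1 + ‖x - toES d (fun i => (n i:ℝ))‖) ^ (-t))
          ≤ ∏ i, ENNReal.ofReal ((1 + |x i - (n i:ℝ)|) ^ (-(t/d))) := by
      intro n
      rw [← ENNReal.ofReal_prod_of_nonneg
        (fun i _ => Real.rpow_nonneg (by positivity) _)]
      apply ENNReal.ofReal_le_ofReal
      refine prod_bound hd ht0 (norm_nonneg _) _ (fun i => abs_nonneg _) (fun i => ?_)
      have h2 := coord_le_norm (x - toES d (fun i => (n i:ℝ))) i
      have h3 : (x - toES d (fun i => (n i:ℝ))) i = x i - (n i : ℝ) := by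
        simp [toES]
      rwa [h3] at h2
    calc ∑' n : Fin d → ℤ,
          ENNReal.ofReal ((1 + ‖x - toES d (fun i => (n i:ℝ))‖) ^ (-t))
        ≤ ∑' n : Fin d → ℤ, ∏ i, ENNReal.ofReal ((1 + |x i - (n i:ℝ)|) ^ (-(t/d))) :=
          ENNReal.tsum_le_tsum key
      _ = ∏ i, ∑' m : ℤ, ENNReal.ofReal ((1 + |x i - (m:ℝ)|) ^ (-(t/d))) :=
          tsum_pi_prod d (fun i m => ENNReal.ofReal ((1 + |x i - (m:ℝ)|) ^ (-(t/d))))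
      _ ≤ ∏ _i : Fin d, M₁ := Finset.prod_le_prod' fun i _ => hM₁ (x i)
      _ = M₁ ^ d := by rw [Finset.prod_const, Finset.card_univ, Fintype.card_fin]

lemma tsum_const_le {X : Type*} {S : Set X} {R : ℕ} (h : S.encard ≤ R) (c : ℝ≥0∞) :
    ∑' _ : S, c ≤ R * c := by
  have hfin : S.Finite := by
    rw [← Set.encard_lt_top_iff]
    exact h.trans_lt (WithTop.coe_lt_top R)
  have := hfin.fintype
  rw [tsum_fintype, Finset.sum_const, nsmul_eq_mul]
  have hcard : (Fintype.card S : ℝ≥0∞) ≤ R := by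
    have h2 : S.encard = (Fintype.card S : ℕ∞) := by
      rw [Set.encard_eq_coe_toFinset_card, Set.toFinset_card]
    rw [h2, Nat.cast_le] at h
    exact_mod_cast Nat.cast_le.mpr h
  simp only [Finset.card_univ]
  exact mul_le_mul_left hcard c

lemma norm_sub_floor_le {d : ℕ} (w : EuclideanSpace ℝ (Fin d))
    (n : Fin d → ℤ) (hn : ∀ i, ⌊w i⌋ = n i) :
    ‖w - toES d (fun i => (n i : ℝ))‖ ≤ Real.sqrt d := by
  rw [EuclideanSpace.norm_eq]
  have hle : ∑ i, ‖(w - toES d (fun i => (n i:ℝ))) i‖ ^ 2 ≤ (d : ℝ) := by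
    calc ∑ i, ‖(w - toES d (fun i => (n i:ℝ))) i‖ ^ 2 ≤ ∑ _i : Fin d, (1:ℝ) := by
          apply Finset.sum_le_sum
          intro i _
          have h3 : (w - toES d (fun i => (n i:ℝ))) i = w i - (n i : ℝ) := by
            simp [toES]
          rw [h3, Real.norm_eq_abs, sq_abs, ← hn i]
          have h4 := Int.fract_nonneg (w i)
          have h5 := Int.fract_lt_one (w i)
          unfold Int.fract at h4 h5
          nlinarith
      _ = (d : ℝ) := by simp
  exact Real.sqrt_le_sqrt hle

lemma lambdaSum {d : ℕ} {t : ℝ} (htd : (d:ℝ) < t) (ht0 : 0 < t) :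
    ∃ K : ℝ≥0∞, K ≠ ⊤ ∧ ∀ (Λ : Set (EuclideanSpace ℝ (Fin d))) (R : ℕ),
      (∀ x : EuclideanSpace ℝ (Fin d),
        (Λ ∩ {y | ∀ i, y i - x i ∈ Set.Icc (0:ℝ) 1}).encard ≤ R) →
      ∀ x : EuclideanSpace ℝ (Fin d),
        ∑' k : Λ, ENNReal.ofReal ((1 + ‖x - (k : EuclideanSpace ℝ (Fin d))‖) ^ (-t)) ≤ K * R := by
  obtain ⟨M, hMtop, hM⟩ := gridSum htd ht0
  have hsd : (0:ℝ) ≤ Real.sqrt d := Real.sqrt_nonneg d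
  set c₀ : ℝ≥0∞ := ENNReal.ofReal ((1 + Real.sqrt d) ^ t) with hc₀
  refine ⟨c₀ * M, ENNReal.mul_ne_top ENNReal.ofReal_ne_top hMtop, fun Λ R hcard x => ?_⟩
  classical
  set φ : Λ → (Fin d → ℤ) := fun k i => ⌊(k : EuclideanSpace ℝ (Fin d)) i⌋ with hφ
  set u : Λ → ℝ≥0∞ :=
    fun k => ENNReal.ofReal ((1 + ‖x - (k : EuclideanSpace ℝ (Fin d))‖) ^ (-t)) with hu
  set g : (Fin d → ℤ) → ℝ≥0∞ :=
    fun n => ENNReal.ofReal ((1 + ‖x - toES d (fun i => (n i:ℝ))‖) ^ (-t)) with hg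
  have step1 : ∑' k : Λ, u k = ∑' n : Fin d → ℤ, ∑' k : {k : Λ // φ k = n}, u k.1 := by
    rw [← (Equiv.sigmaFiberEquiv φ).tsum_eq u, ENNReal.tsum_sigma']
    rfl
  rw [step1]
  have step2 : ∀ n : Fin d → ℤ, ∑' k : {k : Λ // φ k = n}, u k.1 ≤ R * (c₀ * g n) := by
    intro n
    have hfib : ∀ k : {k : Λ // φ k = n}, u k.1 ≤ c₀ * g n := by
      rintro ⟨k, hk⟩
      have hn : ∀ i, ⌊(k : EuclideanSpace ℝ (Fin d)) i⌋ = n i := fun i => congrFun hk i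
      have hnorm := norm_sub_floor_le (k : EuclideanSpace ℝ (Fin d)) n hn
      have htri : 1 + ‖x - toES d (fun i => (n i:ℝ))‖ ≤
          (1 + Real.sqrt d) * (1 + ‖x - (k : EuclideanSpace ℝ (Fin d))‖) := by
        have h6 : ‖x - toES d (fun i => (n i:ℝ))‖ ≤
            ‖x - (k : EuclideanSpace ℝ (Fin d))‖ + ‖(k : EuclideanSpace ℝ (Fin d)) - toES d (fun i => (n i:ℝ))‖ := by
          have : x - toES d (fun i => (n i:ℝ)) =
              (x - (k : EuclideanSpace ℝ (Fin d))) + ((k : EuclideanSpace ℝ (Fin d)) - toES d (fun i => (n i:ℝ))) := by abel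
          rw [this]; exact norm_add_le _ _
        have h7 := norm_nonneg (x - (k : EuclideanSpace ℝ (Fin d)))
        nlinarith
      have h8 : (1 + ‖x - (k : EuclideanSpace ℝ (Fin d))‖) ^ (-t) ≤
          (1 + Real.sqrt d) ^ t * (1 + ‖x - toES d (fun i => (n i:ℝ))‖) ^ (-t) :=
        rpow_neg_scaled (by positivity) (by positivity) htri ht0.le
      calc u k ≤ ENNReal.ofReal ((1 + Real.sqrt d) ^ t *
            (1 + ‖x - toES d (fun i => (n i:ℝ))‖) ^ (-t)) := ENNReal.ofReal_le_ofReal h8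
        _ = c₀ * g n := ENNReal.ofReal_mul (by positivity)
    have hcount : ({k : Λ | φ k = n} : Set Λ).encard ≤ R := by
      have hinj : Set.InjOn (fun k : Λ => (k : EuclideanSpace ℝ (Fin d))) {k : Λ | φ k = n} :=
        fun a _ b _ hab => Subtype.ext hab
      have himg : (fun k : Λ => (k : EuclideanSpace ℝ (Fin d))) '' {k : Λ | φ k = n} ⊆
          Λ ∩ {y | ∀ i, y i - (toES d (fun i => (n i:ℝ))) i ∈ Set.Icc (0:ℝ) 1} := by
        rintro _ ⟨⟨k, hkΛ⟩, hk, rfl⟩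
        refine ⟨hkΛ, fun i => ?_⟩
        have hni : ⌊k i⌋ = n i := congrFun hk i
        have h9 : (toES d (fun i => (n i:ℝ))) i = (n i : ℝ) := by
          simp [toES]
        rw [h9, ← hni]
        exact ⟨by linarith [Int.floor_le (k i)], by linarith [Int.lt_floor_add_one (k i)]⟩
      calc ({k : Λ | φ k = n} : Set Λ).encard
          = ((fun k : Λ => (k : EuclideanSpace ℝ (Fin d))) '' {k : Λ | φ k = n}).encard :=
            (Set.InjOn.encard_image hinj).symm
        _ ≤ (Λ ∩ {y | ∀ i, y i - (toES d (fun i => (n i:ℝ))) i ∈ Set.Icc (0:ℝ) 1}).encard :=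
            Set.encard_le_encard himg
        _ ≤ R := hcard _
    calc ∑' k : {k : Λ // φ k = n}, u k.1 ≤ ∑' _k : {k : Λ // φ k = n}, (c₀ * g n) :=
          ENNReal.tsum_le_tsum hfib
      _ ≤ R * (c₀ * g n) := tsum_const_le hcount _
  calc ∑' n : Fin d → ℤ, ∑' k : {k : Λ // φ k = n}, u k.1
      ≤ ∑' n : Fin d → ℤ, (R : ℝ≥0∞) * (c₀ * g n) := ENNReal.tsum_le_tsum step2
    _ = (R : ℝ≥0∞) * (c₀ * ∑' n, g n) := by rw [ENNReal.tsum_mul_left, ENNReal.tsum_mul_left]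
    _ ≤ (R : ℝ≥0∞) * (c₀ * M) := by
        apply mul_le_mul_right
        exact mul_le_mul_right (hM x) c₀
    _ = c₀ * M * R := by ring

lemma subconv {t : ℝ} (ht0 : 0 ≤ t) {p q r : ℝ} (hp : 0 ≤ p) (hq : 0 ≤ q) (hr : 0 ≤ r)
    (h : r ≤ p + q) :
    (1+p) ^ (-t) * (1+q) ^ (-t) ≤ 2 ^ t * (1+r) ^ (-t) * ((1+p) ^ (-t) + (1+q) ^ (-t)) := by
  have e1 : (0:ℝ) ≤ (1+p) ^ (-t) := Real.rpow_nonneg (by linarith) _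
  have e2 : (0:ℝ) ≤ (1+q) ^ (-t) := Real.rpow_nonneg (by linarith) _
  have e3 : (0:ℝ) ≤ 2 ^ t * (1+r) ^ (-t) := by positivity
  rcases le_total p q with hpq | hpq
  · have h2 : (1+q) ^ (-t) ≤ 2 ^ t * (1+r) ^ (-t) :=
      rpow_neg_scaled (by linarith) two_pos (by linarith) ht0
    calc (1+p) ^ (-t) * (1+q) ^ (-t) ≤ (1+p) ^ (-t) * (2 ^ t * (1+r) ^ (-t)) :=
          mul_le_mul_of_nonneg_left h2 e1
      _ = 2 ^ t * (1+r) ^ (-t) * (1+p) ^ (-t) := by ring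
      _ ≤ 2 ^ t * (1+r) ^ (-t) * ((1+p) ^ (-t) + (1+q) ^ (-t)) :=
          mul_le_mul_of_nonneg_left (le_add_of_nonneg_right e2) e3
  · have h2 : (1+p) ^ (-t) ≤ 2 ^ t * (1+r) ^ (-t) :=
      rpow_neg_scaled (by linarith) two_pos (by linarith) ht0
    calc (1+p) ^ (-t) * (1+q) ^ (-t) ≤ (2 ^ t * (1+r) ^ (-t)) * (1+q) ^ (-t) :=
          mul_le_mul_of_nonneg_right h2 e2
      _ ≤ 2 ^ t * (1+r) ^ (-t) * ((1+p) ^ (-t) + (1+q) ^ (-t)) :=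
          mul_le_mul_of_nonneg_left (le_add_of_nonneg_left e1) e3

end RKD


/-- Decay of reproducing kernels: if `|f_k(z)|, |g_k(z)| ≤ C(1+|z-k|)^{-(s+α)}` over a
relatively separated set `Λ` with `rel(Λ) ≤ R`, then
`K_{x₀} = ∑_k \overline{g_k}(x₀) f_k` satisfies
`|K_{x₀}(z)| ≤ C'·R·(1+|z-x₀|)^{-(s+α)}` with `C' = C'(C,s,α,d)`. -/
theorem reproducing_kernel_decay (d : ℕ) (s α C : ℝ)
    (hs : (d : ℝ) < s) (hα : 0 ≤ α) (hC : 0 < C) :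
    ∃ C' > (0 : ℝ), ∀ (Λ : Set (EuclideanSpace ℝ (Fin d))) (R : ℕ),
      (∀ x : EuclideanSpace ℝ (Fin d),
        (Λ ∩ {y | ∀ i, y i - x i ∈ Set.Icc (0:ℝ) 1}).encard ≤ R) →
      ∀ f g : Λ → EuclideanSpace ℝ (Fin d) → ℂ,
      (∀ (k : Λ) z, ‖f k z‖ ≤ C * (1 + ‖z - (k : EuclideanSpace ℝ (Fin d))‖) ^ (-(s + α))) →
      (∀ (k : Λ) z, ‖g k z‖ ≤ C * (1 + ‖z - (k : EuclideanSpace ℝ (Fin d))‖) ^ (-(s + α))) →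
      ∀ (x₀ z : EuclideanSpace ℝ (Fin d)),
        ‖∑' k : Λ, conj (g k x₀) * f k z‖ ≤ C' * R * (1 + ‖z - x₀‖) ^ (-(s + α)) := by
  set t : ℝ := s + α with hts
  have htd : (d : ℝ) < t := by simp only [hts]; linarith
  have ht0 : (0 : ℝ) < t := lt_of_le_of_lt (Nat.cast_nonneg d) htd
  obtain ⟨K, hKtop, hK⟩ := RKD.lambdaSum htd ht0
  set Kr : ℝ := K.toReal with hKr
  have hKr0 : 0 ≤ Kr := ENNReal.toReal_nonneg
  refine ⟨C * C * 2 ^ t * 2 * (Kr + 1), by positivity, fun Λ R hcard f g hf hg x₀ z => ?_⟩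
  set a : Λ → ℝ := fun k => (1 + ‖x₀ - (k : EuclideanSpace ℝ (Fin d))‖) ^ (-t) with ha
  set b : Λ → ℝ := fun k => (1 + ‖z - (k : EuclideanSpace ℝ (Fin d))‖) ^ (-t) with hb
  have ha0 : ∀ k, 0 ≤ a k := fun k => Real.rpow_nonneg (by positivity) _
  have hb0 : ∀ k, 0 ≤ b k := fun k => Real.rpow_nonneg (by positivity) _
  have hKR : (K * R : ℝ≥0∞) ≠ ⊤ := ENNReal.mul_ne_top hKtop (ENNReal.natCast_ne_top R)
  -- summability and bounds for a and b
  have haux : ∀ (w : EuclideanSpace ℝ (Fin d)),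
      Summable (fun k : Λ => (1 + ‖w - (k : EuclideanSpace ℝ (Fin d))‖) ^ (-t)) ∧
      ∑' k : Λ, (1 + ‖w - (k : EuclideanSpace ℝ (Fin d))‖) ^ (-t) ≤ Kr * R := by
    intro w
    have h1 := hK Λ R hcard w
    have h1top : (∑' k : Λ, ENNReal.ofReal ((1 + ‖w - (k : EuclideanSpace ℝ (Fin d))‖) ^ (-t))) ≠ ⊤ :=
      ne_top_of_le_ne_top hKR h1
    have hnn : ∀ k : Λ, (0:ℝ) ≤ (1 + ‖w - (k : EuclideanSpace ℝ (Fin d))‖) ^ (-t) :=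
      fun k => Real.rpow_nonneg (by positivity) _
    have hsum : Summable (fun k : Λ => (1 + ‖w - (k : EuclideanSpace ℝ (Fin d))‖) ^ (-t)) :=
      (ENNReal.summable_toReal h1top).congr (fun k => ENNReal.toReal_ofReal (hnn k))
    refine ⟨hsum, ?_⟩
    have heq : ∑' k : Λ, (1 + ‖w - (k : EuclideanSpace ℝ (Fin d))‖) ^ (-t) =
        (∑' k : Λ, ENNReal.ofReal ((1 + ‖w - (k : EuclideanSpace ℝ (Fin d))‖) ^ (-t))).toReal := by
      rw [ENNReal.tsum_toReal_eq (fun _ => ENNReal.ofReal_ne_top)]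
      exact tsum_congr fun k => (ENNReal.toReal_ofReal (hnn k)).symm
    rw [heq]
    calc (∑' k : Λ, ENNReal.ofReal ((1 + ‖w - (k : EuclideanSpace ℝ (Fin d))‖) ^ (-t))).toReal
        ≤ (K * R).toReal := ENNReal.toReal_mono hKR h1
      _ = Kr * R := by simp [ENNReal.toReal_mul, hKr]
  obtain ⟨hasum, hatsum⟩ := haux x₀
  obtain ⟨hbsum, hbtsum⟩ := haux z
  set u₀ : ℝ := (1 + ‖z - x₀‖) ^ (-t) with hu₀
  have hu₀0 : 0 ≤ u₀ := Real.rpow_nonneg (by positivity) _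
  -- pointwise bound
  have hbound : ∀ k : Λ, ‖conj (g k x₀) * f k z‖ ≤ (C * C * 2 ^ t * u₀) * (a k + b k) := by
    intro k
    have h1 : ‖conj (g k x₀) * f k z‖ = ‖g k x₀‖ * ‖f k z‖ := by
      rw [norm_mul, RCLike.norm_conj]
    have h2 : ‖g k x₀‖ * ‖f k z‖ ≤ (C * a k) * (C * b k) :=
      mul_le_mul (hg k x₀) (hf k z) (norm_nonneg _) (by positivity)
    have h3 : a k * b k ≤ 2 ^ t * u₀ * (a k + b k) := by
      have htri : ‖z - x₀‖ ≤ ‖x₀ - (k : EuclideanSpace ℝ (Fin d))‖ + ‖z - (k : EuclideanSpace ℝ (Fin d))‖ := by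
        have he : z - x₀ = (z - (k : EuclideanSpace ℝ (Fin d))) - (x₀ - (k : EuclideanSpace ℝ (Fin d))) := by abel
        rw [he]
        exact (norm_sub_le _ _).trans (by rw [add_comm])
      exact RKD.subconv ht0.le (norm_nonneg _) (norm_nonneg _) (norm_nonneg _) htri
    calc ‖conj (g k x₀) * f k z‖ = ‖g k x₀‖ * ‖f k z‖ := h1
      _ ≤ (C * a k) * (C * b k) := h2
      _ = C * C * (a k * b k) := by ring
      _ ≤ C * C * (2 ^ t * u₀ * (a k + b k)) := by
          apply mul_le_mul_of_nonneg_left h3 (by positivity)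
      _ = (C * C * 2 ^ t * u₀) * (a k + b k) := by ring
  have hWsum : Summable (fun k : Λ => (C * C * 2 ^ t * u₀) * (a k + b k)) :=
    (hasum.add hbsum).mul_left _
  have hnsum : Summable (fun k : Λ => ‖conj (g k x₀) * f k z‖) :=
    Summable.of_nonneg_of_le (fun k => norm_nonneg _) hbound hWsum
  calc ‖∑' k : Λ, conj (g k x₀) * f k z‖
      ≤ ∑' k : Λ, ‖conj (g k x₀) * f k z‖ := norm_tsum_le_tsum_norm hnsum
    _ ≤ ∑' k : Λ, (C * C * 2 ^ t * u₀) * (a k + b k) := Summable.tsum_le_tsum hbound hnsum hWsum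
    _ = (C * C * 2 ^ t * u₀) * (∑' k : Λ, a k + ∑' k : Λ, b k) := by
        rw [tsum_mul_left, Summable.tsum_add hasum hbsum]
    _ ≤ (C * C * 2 ^ t * u₀) * (Kr * R + Kr * R) := by
        apply mul_le_mul_of_nonneg_left (add_le_add hatsum hbtsum) (by positivity)
    _ = (C * C * 2 ^ t * 2 * Kr) * R * u₀ := by ring
    _ ≤ C * C * 2 ^ t * 2 * (Kr + 1) * R * u₀ := by
        have h9 : (C * C * 2 ^ t * 2 * Kr) ≤ C * C * 2 ^ t * 2 * (Kr + 1) := by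
          have h2t : (0:ℝ) < 2 ^ t := Real.rpow_pos_of_pos two_pos t
          nlinarith
        apply mul_le_mul_of_nonneg_right (mul_le_mul_of_nonneg_right h9 (Nat.cast_nonneg R)) hu₀0
end
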